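/- Let r ≥ 1 and let M be a 2-dimensional linear subspace of the space of skew-symmetric (N+1)×(N+1) complex matrices such that every nonzero matrix in M has rank 2r. Then M is a compression space: there exist linear subspaces V′ and W′ of ℂ^{N+1} such that A·v ∈ W′ for every A ∈ M and every v ∈ V′, and (N+1 − dim V′) + dim W′ = 2r. -/

import Mathlib

open Matrix Polynomial

set_option maxHeartbeats 1000000
set_option synthInstance.maxHeartbeats 400000

namespace Stmt1Aux

noncomputable section

abbrev K := RatFunc ℂ

variable {n : ℕ}

/-- coordinatewise evaluation of a polynomial vector, as a `ℂ`-linear map. -/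
def evv (s : ℂ) : (Fin n → ℂ[X]) →ₗ[ℂ] (Fin n → ℂ) where
  toFun u := fun i => (u i).eval s
  map_add' u v := by funext i; simp
  map_smul' c u := by funext i; simp [Polynomial.smul_eq_C_mul]

@[simp] lemma evv_apply (s : ℂ) (u : Fin n → ℂ[X]) (i : Fin n) :
    evv s u i = (u i).eval s := rfl

/-- coordinatewise coefficient extraction, as a `ℂ`-linear map. -/
def cof (j : ℕ) : (Fin n → ℂ[X]) →ₗ[ℂ] (Fin n → ℂ) where
  toFun u := fun i => (u i).coeff j
  map_add' u v := by funext i; simp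
  map_smul' c u := by funext i; simp

@[simp] lemma cof_apply (j : ℕ) (u : Fin n → ℂ[X]) (i : Fin n) :
    cof j u i = (u i).coeff j := rfl

/-- coordinatewise map to rational functions, as a `ℂ[X]`-linear map. -/
def φv : (Fin n → ℂ[X]) →ₗ[ℂ[X]] (Fin n → K) where
  toFun u := fun i => algebraMap ℂ[X] K (u i)
  map_add' u v := by funext i; simp
  map_smul' c u := by funext i; simp [Algebra.smul_def]

@[simp] lemma φv_apply (u : Fin n → ℂ[X]) (i : Fin n) :
    φv u i = algebraMap ℂ[X] K (u i) := rfl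

lemma φv_injective : Function.Injective (φv (n := n)) := by
  intro u v h
  funext i
  have := congrFun (congrArg (fun w => (w : Fin n → K)) h) i
  simpa using IsFractionRing.injective ℂ[X] K (by simpa using this)

/-- The matrix pencil `B + X•A` over `ℂ[X]`. -/
def Pm (A B : Matrix (Fin n) (Fin n) ℂ) : Matrix (Fin n) (Fin n) ℂ[X] :=
  B.map Polynomial.C + (X : ℂ[X]) • A.map Polynomial.C

lemma Pm_apply (A B : Matrix (Fin n) (Fin n) ℂ) (i j : Fin n) :
    Pm A B i j = Polynomial.C (B i j) + X * Polynomial.C (A i j) := by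
  simp [Pm]

lemma evv_mulVec (s : ℂ) (A B : Matrix (Fin n) (Fin n) ℂ) (u : Fin n → ℂ[X]) :
    evv s ((Pm A B).mulVec u) = (B + s • A).mulVec (evv s u) := by
  funext i
  simp only [evv_apply, Matrix.mulVec, dotProduct, Pm_apply, eval_finset_sum,
    Matrix.add_apply, Matrix.smul_apply, eval_mul, eval_add, eval_C, eval_X, smul_eq_mul]


lemma cof_succ_mulVec (k : ℕ) (A B : Matrix (Fin n) (Fin n) ℂ) (u : Fin n → ℂ[X]) :
    cof (k+1) ((Pm A B).mulVec u) = B.mulVec (cof (k+1) u) + A.mulVec (cof k u) := by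
  funext i
  simp only [cof_apply, Matrix.mulVec, dotProduct, Pm_apply, Pi.add_apply,
    Polynomial.finset_sum_coeff, add_mul, coeff_add, coeff_C_mul, coeff_X_mul,
    ← Finset.sum_add_distrib]
  congr 1
  funext x
  rw [mul_assoc, coeff_X_mul, coeff_C_mul]

lemma cof_zero_mulVec (A B : Matrix (Fin n) (Fin n) ℂ) (u : Fin n → ℂ[X]) :
    cof 0 ((Pm A B).mulVec u) = B.mulVec (cof 0 u) := by
  funext i
  simp only [cof_apply, Matrix.mulVec, dotProduct, Pm_apply,
    Polynomial.finset_sum_coeff, add_mul, coeff_add, coeff_C_mul, mul_coeff_zero,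
    coeff_X_zero, zero_mul, add_zero, coeff_C_zero, coeff_C]
  simp

lemma φv_mulVec (Q : Matrix (Fin n) (Fin n) ℂ[X]) (u : Fin n → ℂ[X]) :
    φv (Q.mulVec u) = (Q.map (algebraMap ℂ[X] K)).mulVec (φv u) := by
  funext i
  simp [Matrix.mulVec, dotProduct, map_sum]

/-- If `Q` is saturated at `s` (dividing by `X - s` stays in `Q`), then the evaluations
at `s` of a `ℂ[X]`-basis of `Q` are `ℂ`-linearly independent. -/
lemma indep_eval (s : ℂ) (Q : Submodule ℂ[X] (Fin n → ℂ[X])) {m : ℕ}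
    (bas : Module.Basis (Fin m) ℂ[X] Q)
    (hsat : ∀ w : Fin n → ℂ[X], ((X - Polynomial.C s) • w) ∈ Q → w ∈ Q) :
    LinearIndependent ℂ (fun i => evv s ((bas i : Fin n → ℂ[X]))) := by
  rw [Fintype.linearIndependent_iff]
  intro c hc
  set u : Q := ∑ i, (Polynomial.C (c i)) • bas i with hu
  have huc : (u : Fin n → ℂ[X]) = ∑ i, (Polynomial.C (c i)) • (bas i : Fin n → ℂ[X]) := by
    simp [hu]
  have hev : evv s (u : Fin n → ℂ[X]) = 0 := by
    rw [huc]
    rw [map_sum]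
    rw [← hc]
    congr 1
    funext i
    funext i'
    simp [Polynomial.smul_eq_C_mul]
  -- every coordinate of u is divisible by X - C s
  have hdvd : ∀ i : Fin n, (X - Polynomial.C s) ∣ (u : Fin n → ℂ[X]) i := by
    intro i
    rw [Polynomial.dvd_iff_isRoot]
    exact congrFun hev i
  choose w hw using hdvd
  have hwQ : w ∈ Q := by
    apply hsat
    have : (X - Polynomial.C s) • w = (u : Fin n → ℂ[X]) := by
      funext i; exact (hw i).symm
    rw [this]; exact u.2
  have hXw : u = (X - Polynomial.C s) • (⟨w, hwQ⟩ : Q) := by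
    apply Subtype.ext
    funext i
    exact hw i
  -- compare basis representations
  intro i
  have h1 : bas.repr u i = Polynomial.C (c i) := by
    rw [hu, Module.Basis.repr_sum_self]
  have h2 : bas.repr u i = (X - Polynomial.C s) * bas.repr ⟨w, hwQ⟩ i := by
    rw [hXw, _root_.map_smul]; rfl
  have := h1.symm.trans h2
  have := congrArg (fun p => Polynomial.eval s p) this
  simpa using this

lemma evv_polysmul (s : ℂ) (p : ℂ[X]) (v : Fin n → ℂ[X]) :
    evv s (p • v) = (p.eval s) • evv s v := by
  funext i; simp

lemma map_evv_eq_span (s : ℂ) (Q : Submodule ℂ[X] (Fin n → ℂ[X])) {m : ℕ}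
    (bas : Module.Basis (Fin m) ℂ[X] Q) :
    Submodule.map (evv s) (Q.restrictScalars ℂ)
      = Submodule.span ℂ (Set.range fun i => evv s ((bas i : Fin n → ℂ[X]))) := by
  apply le_antisymm
  · rintro x ⟨u, hu, rfl⟩
    have hrepr : (u : Fin n → ℂ[X]) = ∑ i, (bas.repr ⟨u, hu⟩ i) • (bas i : Fin n → ℂ[X]) := by
      have := bas.sum_repr ⟨u, hu⟩
      exact congrArg (Subtype.val) this.symm |>.trans (by simp only [Submodule.coe_sum, Submodule.coe_smul])
    rw [hrepr, map_sum]
    apply Submodule.sum_mem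
    intro i _
    rw [evv_polysmul]
    exact Submodule.smul_mem _ _ (Submodule.subset_span ⟨i, rfl⟩)
  · rw [Submodule.span_le]
    rintro x ⟨i, rfl⟩
    exact ⟨bas i, (bas i).2, rfl⟩

lemma ker_sat (Qm : Matrix (Fin n) (Fin n) ℂ[X]) (p : ℂ[X]) (hp : p ≠ 0) :
    ∀ w : Fin n → ℂ[X], p • w ∈ LinearMap.ker Qm.mulVecLin →
      w ∈ LinearMap.ker Qm.mulVecLin := by
  intro w hw
  rw [LinearMap.mem_ker] at hw ⊢
  have : p • Qm.mulVecLin w = 0 := by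
    rw [← _root_.map_smul]; exact hw
  funext i
  have hi := congrFun this i
  simp only [Pi.smul_apply, smul_eq_mul, Pi.zero_apply] at hi
  rcases mul_eq_zero.1 hi with h | h
  · exact absurd h hp
  · exact h

/-- The saturation of a submodule of `ℂ[X]ⁿ`. -/
def satur (L : Submodule ℂ[X] (Fin n → ℂ[X])) : Submodule ℂ[X] (Fin n → ℂ[X]) where
  carrier := {u | ∃ d : ℂ[X], d ≠ 0 ∧ d • u ∈ L}
  add_mem' := by
    rintro a b ⟨d, hd, hdL⟩ ⟨e, he, heL⟩
    refine ⟨d * e, mul_ne_zero hd he, ?_⟩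
    have : (d * e) • (a + b) = e • (d • a) + d • (e • b) := by
      rw [smul_add]; rw [smul_smul, smul_smul]; ring_nf
    rw [this]
    exact Submodule.add_mem _ (Submodule.smul_mem _ _ hdL) (Submodule.smul_mem _ _ heL)
  zero_mem' := ⟨1, one_ne_zero, by simp⟩
  smul_mem' := by
    rintro c a ⟨d, hd, hdL⟩
    exact ⟨d, hd, by rw [smul_comm]; exact Submodule.smul_mem _ _ hdL⟩

lemma exists_good (L : Submodule ℂ[X] (Fin n → ℂ[X])) :
    ∃ f : ℂ[X], f ≠ 0 ∧ ∀ s : ℂ, ¬ f.IsRoot s →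
      ∀ w : Fin n → ℂ[X], (X - Polynomial.C s) • w ∈ L → w ∈ L := by
  obtain ⟨H, hH⟩ : (satur L).FG := IsNoetherian.noetherian (satur L)
  -- for each generator pick a denominator
  have hmem : ∀ h ∈ H, ∃ d : ℂ[X], d ≠ 0 ∧ d • h ∈ L := by
    intro h hh
    have : h ∈ satur L := by rw [← hH]; exact Submodule.subset_span hh
    exact this
  choose! d hd0 hdL using hmem
  refine ⟨∏ h ∈ H, d h, Finset.prod_ne_zero_iff.2 (fun h hh => hd0 h hh), ?_⟩
  have key : ∀ u ∈ satur L, (∏ h ∈ H, d h) • u ∈ L := by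
    have hsub : satur L ≤ Submodule.comap
        (LinearMap.lsmul ℂ[X] (Fin n → ℂ[X]) (∏ h ∈ H, d h)) L := by
      rw [← hH, Submodule.span_le]
      intro h hh
      simp only [SetLike.mem_coe, Submodule.mem_comap, LinearMap.lsmul_apply]
      have hprod : (∏ g ∈ H.erase h, d g) * d h = ∏ g ∈ H, d g :=
        Finset.prod_erase_mul _ _ hh
      rw [← hprod, mul_smul]
      exact Submodule.smul_mem _ _ (hdL h hh)
    intro u hu
    exact hsub hu
  intro s hs w hw
  have hwsat : w ∈ satur L := ⟨X - Polynomial.C s, X_sub_C_ne_zero s, hw⟩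
  have hfw : (∏ h ∈ H, d h) • w ∈ L := key w hwsat
  have hcop : IsCoprime (X - Polynomial.C s) (∏ h ∈ H, d h) := by
    rw [(irreducible_X_sub_C s).coprime_iff_not_dvd]
    intro hdvd
    exact hs (Polynomial.dvd_iff_isRoot.1 hdvd)
  obtain ⟨a, b, hab⟩ := hcop
  have : w = a • ((X - Polynomial.C s) • w) + b • ((∏ h ∈ H, d h) • w) := by
    rw [smul_smul, smul_smul, ← add_smul, hab, one_smul]
  rw [this]
  exact Submodule.add_mem _ (Submodule.smul_mem _ _ hw) (Submodule.smul_mem _ _ hfw)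

lemma clear_denoms (w : Fin n → K) :
    ∃ (b : ℂ[X]) (u : Fin n → ℂ[X]), b ≠ 0 ∧ φv u = (algebraMap ℂ[X] K b) • w := by
  obtain ⟨b, hb⟩ := IsLocalization.exist_integer_multiples (nonZeroDivisors ℂ[X])
    Finset.univ w
  have : ∀ i : Fin n, ∃ p : ℂ[X], algebraMap ℂ[X] K p = (b : ℂ[X]) • w i := by
    intro i
    exact hb i (Finset.mem_univ i)
  choose u hu using this
  refine ⟨b, u, nonZeroDivisors.ne_zero b.2, ?_⟩
  funext i
  rw [φv_apply, hu i, Algebra.smul_def]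
  rfl

lemma indep_phi (Q : Submodule ℂ[X] (Fin n → ℂ[X])) {m : ℕ}
    (bas : Module.Basis (Fin m) ℂ[X] Q) :
    LinearIndependent K (fun i => φv ((bas i : Fin n → ℂ[X]))) := by
  rw [Fintype.linearIndependent_iff]
  intro c hc
  obtain ⟨b, hb⟩ := IsLocalization.exist_integer_multiples (nonZeroDivisors ℂ[X])
    Finset.univ c
  have : ∀ i : Fin m, ∃ p : ℂ[X], algebraMap ℂ[X] K p = (b : ℂ[X]) • c i := by
    intro i; exact hb i (Finset.mem_univ i)
  choose dd hdd using this
  set u : Q := ∑ i, dd i • bas i with hu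
  have hval : φv (u : Fin n → ℂ[X]) = 0 := by
    have hcoe : (u : Fin n → ℂ[X]) = ∑ i, dd i • (bas i : Fin n → ℂ[X]) := by simp [hu]
    rw [hcoe, map_sum]
    have : ∀ i, φv (dd i • (bas i : Fin n → ℂ[X]))
        = ((b : ℂ[X]) • c i) • φv ((bas i : Fin n → ℂ[X])) := by
      intro i
      rw [LinearMap.map_smul, ← hdd i, algebraMap_smul]
    rw [Finset.sum_congr rfl (fun i _ => this i)]
    have : ∀ i, ((b : ℂ[X]) • c i) • φv ((bas i : Fin n → ℂ[X]))
        = (b : ℂ[X]) • (c i • φv ((bas i : Fin n → ℂ[X]))) := by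
      intro i
      rw [smul_assoc]
    rw [Finset.sum_congr rfl (fun i _ => this i), ← Finset.smul_sum, hc, smul_zero]
  have hu0 : u = 0 := by
    apply Subtype.ext
    apply φv_injective
    rw [hval]; simp
  have hd0 : ∀ i, dd i = 0 := by
    intro i
    have h1 : bas.repr u i = dd i := by rw [hu, Module.Basis.repr_sum_self]
    rw [hu0] at h1
    simpa using h1.symm
  intro i
  have : algebraMap ℂ[X] K (dd i) = (b : ℂ[X]) • c i := hdd i
  rw [hd0 i, map_zero] at this
  rw [Algebra.smul_def] at this
  rcases mul_eq_zero.1 this.symm with h | h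
  · exact absurd h (IsFractionRing.to_map_ne_zero_of_mem_nonZeroDivisors b.2)
  · exact h

lemma span_phi_eq (Q : Submodule ℂ[X] (Fin n → ℂ[X])) {m : ℕ}
    (bas : Module.Basis (Fin m) ℂ[X] Q) :
    Submodule.span K (φv '' (Q : Set (Fin n → ℂ[X])))
      = Submodule.span K (Set.range fun i => φv ((bas i : Fin n → ℂ[X]))) := by
  apply le_antisymm
  · rw [Submodule.span_le]
    rintro x ⟨u, hu, rfl⟩
    have hrepr : (u : Fin n → ℂ[X]) = ∑ i, (bas.repr ⟨u, hu⟩ i) • (bas i : Fin n → ℂ[X]) := by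
      have := bas.sum_repr ⟨u, hu⟩
      exact congrArg (Subtype.val) this.symm |>.trans (by simp only [Submodule.coe_sum, Submodule.coe_smul])
    rw [hrepr, map_sum]
    apply Submodule.sum_mem
    intro i _
    rw [LinearMap.map_smul, ← algebraMap_smul K (bas.repr ⟨u, hu⟩ i)]
    exact Submodule.smul_mem _ _ (Submodule.subset_span ⟨i, rfl⟩)
  · rw [Submodule.span_le]
    rintro x ⟨i, rfl⟩
    exact Submodule.subset_span ⟨bas i, (bas i).2, rfl⟩

lemma finrank_span_phi (Q : Submodule ℂ[X] (Fin n → ℂ[X])) {m : ℕ}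
    (bas : Module.Basis (Fin m) ℂ[X] Q) :
    Module.finrank K (Submodule.span K (φv '' (Q : Set (Fin n → ℂ[X])))) = m := by
  rw [span_phi_eq Q bas, finrank_span_eq_card (indep_phi Q bas), Fintype.card_fin]

lemma span_phi_ker (Qm : Matrix (Fin n) (Fin n) ℂ[X]) :
    Submodule.span K (φv '' ((LinearMap.ker Qm.mulVecLin : Submodule ℂ[X] _) : Set _))
      = LinearMap.ker (Qm.map (algebraMap ℂ[X] K)).mulVecLin := by
  apply le_antisymm
  · rw [Submodule.span_le]
    rintro x ⟨u, hu, rfl⟩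
    simp only [SetLike.mem_coe, LinearMap.mem_ker, Matrix.mulVecLin_apply]
    rw [← φv_mulVec]
    have : Qm.mulVec u = 0 := hu
    rw [this]
    simp
  · intro w hw
    obtain ⟨b, u, hb, hu⟩ := clear_denoms w
    have hker : Qm.mulVec u = 0 := by
      apply φv_injective
      rw [φv_mulVec, hu, map_zero]
      have : (Qm.map (algebraMap ℂ[X] K)).mulVec w = 0 := hw
      rw [Matrix.mulVec_smul, this, smul_zero]
    have hbne : algebraMap ℂ[X] K b ≠ 0 :=
      IsFractionRing.to_map_ne_zero_of_mem_nonZeroDivisors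
        (mem_nonZeroDivisors_of_ne_zero hb)
    have hww : w = (algebraMap ℂ[X] K b)⁻¹ • φv u := by
      rw [hu, smul_smul, inv_mul_cancel₀ hbne, one_smul]
    rw [hww]
    exact Submodule.smul_mem _ _ (Submodule.subset_span ⟨u, hker, rfl⟩)

lemma span_phi_range (Qm : Matrix (Fin n) (Fin n) ℂ[X]) :
    Submodule.span K (φv '' ((LinearMap.range Qm.mulVecLin : Submodule ℂ[X] _) : Set _))
      = LinearMap.range (Qm.map (algebraMap ℂ[X] K)).mulVecLin := by
  apply le_antisymm
  · rw [Submodule.span_le]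
    rintro x ⟨u, ⟨c, rfl⟩, rfl⟩
    simp only [SetLike.mem_coe, LinearMap.mem_range, Matrix.mulVecLin_apply]
    exact ⟨φv c, (φv_mulVec Qm c).symm⟩
  · rintro w ⟨y, rfl⟩
    obtain ⟨b, u, hb, hu⟩ := clear_denoms y
    have hbne : algebraMap ℂ[X] K b ≠ 0 :=
      IsFractionRing.to_map_ne_zero_of_mem_nonZeroDivisors
        (mem_nonZeroDivisors_of_ne_zero hb)
    have : (Qm.map (algebraMap ℂ[X] K)).mulVecLin y
        = (algebraMap ℂ[X] K b)⁻¹ • φv (Qm.mulVec u) := by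
      rw [φv_mulVec, hu, Matrix.mulVecLin_apply, Matrix.mulVec_smul, smul_smul,
        inv_mul_cancel₀ hbne, one_smul]
    rw [this]
    exact Submodule.smul_mem _ _
      (Submodule.subset_span ⟨Qm.mulVec u, ⟨u, rfl⟩, rfl⟩)

/-- The kernel of `B` is contained in the span of the coefficients of polynomial
solutions of the pencil `B + X•A`. -/
lemma kerB_le_coeff_span (r : ℕ) (A B : Matrix (Fin n) (Fin n) ℂ)
    (hAB : ∀ s : ℂ, (B + s • A).rank = 2*r) :
    LinearMap.ker B.mulVecLin ≤
      Submodule.span ℂ {v | ∃ u ∈ LinearMap.ker (Pm A B).mulVecLin, ∃ j, v = cof j u} := by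
  classical
  set Nsub := LinearMap.ker (Pm A B).mulVecLin with hNsub
  set Lsub := LinearMap.range (Pm A B).mulVecLin with hLsub
  obtain ⟨m, nb⟩ := Submodule.basisOfPid (Pi.basisFun ℂ[X] (Fin n)) Nsub
  obtain ⟨t, lb⟩ := Submodule.basisOfPid (Pi.basisFun ℂ[X] (Fin n)) Lsub
  -- rank-nullity over the fraction field
  have htm : t + m = n := by
    have h1 := LinearMap.finrank_range_add_finrank_ker
      ((Pm A B).map (algebraMap ℂ[X] K)).mulVecLin
    rw [← span_phi_range, ← span_phi_ker, finrank_span_phi _ lb, finrank_span_phi _ nb,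
      Module.finrank_fin_fun] at h1
    exact h1
  -- a good evaluation point for the range lattice
  obtain ⟨f, hf0, hfsat⟩ := exists_good Lsub
  obtain ⟨s₀, hs₀⟩ : ∃ s₀ : ℂ, ¬ f.IsRoot s₀ := by
    have hfin := Polynomial.finite_setOf_isRoot hf0
    obtain ⟨s₀, hs₀⟩ := (hfin.infinite_compl).nonempty
    exact ⟨s₀, hs₀⟩
  -- the number of basis elements of the range lattice is 2r
  have ht2r : t = 2*r := by
    have hindep := indep_eval s₀ Lsub lb (hfsat s₀ hs₀)
    have hspan := map_evv_eq_span s₀ Lsub lb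
    have hfr : Module.finrank ℂ (Submodule.map (evv s₀) (Lsub.restrictScalars ℂ)) = t := by
      rw [hspan, finrank_span_eq_card hindep, Fintype.card_fin]
    have himg : Submodule.map (evv s₀) (Lsub.restrictScalars ℂ)
        = LinearMap.range (B + s₀ • A).mulVecLin := by
      apply le_antisymm
      · rintro x ⟨u, hu, rfl⟩
        obtain ⟨c, rfl⟩ := hu
        exact ⟨evv s₀ c, (evv_mulVec s₀ A B c).symm⟩
      · rintro x ⟨y, rfl⟩
        refine ⟨(Pm A B).mulVec (fun j => Polynomial.C (y j)), ⟨_, rfl⟩, ?_⟩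
        have hconst : evv s₀ (fun j => Polynomial.C (y j)) = y := by funext i; simp
        rw [evv_mulVec, hconst, Matrix.mulVecLin_apply]
    rw [himg] at hfr
    have := hAB s₀
    rw [Matrix.rank] at this
    rw [hfr] at this
    exact this
  -- evaluation at 0 of the kernel lattice
  have hindep0 := indep_eval 0 Nsub nb
    (by
      intro w hw
      exact ker_sat (Pm A B) (X - Polynomial.C 0) (X_sub_C_ne_zero 0) w hw)
  have hspan0 := map_evv_eq_span 0 Nsub nb
  have hfr0 : Module.finrank ℂ (Submodule.map (evv 0) (Nsub.restrictScalars ℂ)) = m := by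
    rw [hspan0, finrank_span_eq_card hindep0, Fintype.card_fin]
  have hle : Submodule.map (evv 0) (Nsub.restrictScalars ℂ) ≤ LinearMap.ker B.mulVecLin := by
    rintro x ⟨u, hu, rfl⟩
    have hu' : (Pm A B).mulVec u = 0 := hu
    rw [LinearMap.mem_ker, Matrix.mulVecLin_apply]
    have := evv_mulVec 0 A B u
    rw [hu'] at this
    simp only [map_zero] at this
    have hBz : B + (0:ℂ) • A = B := by simp
    rw [hBz] at this
    exact this.symm
  have hkerB : Module.finrank ℂ (LinearMap.ker B.mulVecLin) = m := by
    have h1 := LinearMap.finrank_range_add_finrank_ker (B.mulVecLin)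
    rw [Module.finrank_fin_fun] at h1
    have hB0 : (B + (0:ℂ) • A) = B := by simp
    have hrB := hAB 0
    rw [hB0, Matrix.rank] at hrB
    rw [hrB] at h1
    omega
  have heq : Submodule.map (evv 0) (Nsub.restrictScalars ℂ) = LinearMap.ker B.mulVecLin :=
    Submodule.eq_of_le_of_finrank_le hle (by rw [hfr0, hkerB])
  rw [← heq]
  rintro x ⟨u, hu, rfl⟩
  apply Submodule.subset_span
  refine ⟨u, hu, 0, ?_⟩
  funext i
  simp [coeff_zero_eq_eval_zero]

end

end Stmt1Aux

open Stmt1Aux in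
/-- A 2-dimensional space of skew-symmetric complex matrices of
constant rank `2r` is a compression space. -/
theorem stmt_1 (r N : ℕ) (hr : 1 ≤ r)
    (M : Submodule ℂ (Matrix (Fin (N+1)) (Fin (N+1)) ℂ))
    (hdim : Module.finrank ℂ M = 2)
    (hskew : ∀ A ∈ M, Aᵀ = -A)
    (hrank : ∀ A ∈ M, A ≠ 0 → A.rank = 2*r) :
    ∃ (V' W' : Submodule ℂ (Fin (N+1) → ℂ)),
      (∀ A ∈ M, ∀ v ∈ V', A.mulVec v ∈ W') ∧
      (N + 1 - Module.finrank ℂ V') + Module.finrank ℂ W' = 2*r := by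
  classical
  -- choose a basis of M
  let b : Module.Basis (Fin 2) ℂ M := Module.finBasisOfFinrankEq ℂ M hdim
  set A : Matrix (Fin (N+1)) (Fin (N+1)) ℂ := (b 0 : Matrix (Fin (N+1)) (Fin (N+1)) ℂ) with hA
  set B : Matrix (Fin (N+1)) (Fin (N+1)) ℂ := (b 1 : Matrix (Fin (N+1)) (Fin (N+1)) ℂ) with hB
  have hmemAB : ∀ c d : ℂ, d • A + c • B ∈ M := fun c d =>
    M.add_mem (M.smul_mem d (b 0).2) (M.smul_mem c (b 1).2)
  have hne : ∀ s : ℂ, B + s • A ≠ 0 := by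
    intro s hzero
    have : s • b 0 + (1:ℂ) • b 1 = 0 := by
      apply Subtype.ext
      have hcoe : ((s • b 0 + (1:ℂ) • b 1 : M) : Matrix (Fin (N+1)) (Fin (N+1)) ℂ)
          = B + s • A := by
        push_cast
        rw [one_smul, hA, hB]
        exact add_comm _ _
      rw [hcoe]
      simpa using hzero
    have hli := Fintype.linearIndependent_iff.1 b.linearIndependent
      (fun i => if i = 0 then s else 1) (by simpa using this)
    simpa using hli 1
  have hAB : ∀ s : ℂ, (B + s • A).rank = 2*r := by
    intro s
    apply hrank
    · have : B + s • A = s • A + (1:ℂ) • B := by simp [add_comm]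
      rw [this]
      exact hmemAB 1 s
    · exact hne s
  -- the compression pair
  set V' : Submodule ℂ (Fin (N+1) → ℂ) :=
    Submodule.span ℂ {v | ∃ u ∈ LinearMap.ker (Pm A B).mulVecLin, ∃ j, v = cof j u} with hV'
  set W' : Submodule ℂ (Fin (N+1) → ℂ) := Submodule.map B.mulVecLin V' with hW'
  have hBmap : ∀ v ∈ V', B.mulVec v ∈ W' := by
    intro v hv
    exact Submodule.mem_map_of_mem hv
  have hAmap : ∀ v ∈ V', A.mulVec v ∈ W' := by
    have hsub : V' ≤ Submodule.comap A.mulVecLin W' := by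
      rw [hV', Submodule.span_le]
      rintro v ⟨u, hu, j, rfl⟩
      simp only [SetLike.mem_coe, Submodule.mem_comap, Matrix.mulVecLin_apply]
      have h0 : cof (j+1) ((Pm A B).mulVec u) = 0 := by
        have : (Pm A B).mulVec u = 0 := hu
        rw [this]; simp
      rw [cof_succ_mulVec] at h0
      have : A.mulVec (cof j u) = B.mulVec (-(cof (j+1) u)) := by
        rw [Matrix.mulVec_neg]
        exact eq_neg_of_add_eq_zero_right h0
      rw [this]
      apply Submodule.mem_map_of_mem
      apply Submodule.neg_mem
      exact Submodule.subset_span ⟨u, hu, j+1, rfl⟩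
    intro v hv
    exact hsub hv
  refine ⟨V', W', ?_, ?_⟩
  · -- the mapping property
    intro C hC v hv
    have hrepr : C = (b.repr ⟨C, hC⟩ 0) • A + (b.repr ⟨C, hC⟩ 1) • B := by
      have := b.sum_repr ⟨C, hC⟩
      have hcoe := congrArg (Subtype.val) this
      rw [Fin.sum_univ_two] at hcoe
      simpa [hA, hB] using hcoe.symm
    rw [hrepr, Matrix.add_mulVec, Matrix.smul_mulVec, Matrix.smul_mulVec]
    exact W'.add_mem (W'.smul_mem _ (hAmap v hv)) (W'.smul_mem _ (hBmap v hv))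
  · -- the dimension count
    have hker : LinearMap.ker B.mulVecLin ≤ V' := kerB_le_coeff_span r A B hAB
    have hrn1 : Module.finrank ℂ W'
        + Module.finrank ℂ (LinearMap.ker (B.mulVecLin.domRestrict V')) 
        = Module.finrank ℂ V' := by
      have := LinearMap.finrank_range_add_finrank_ker (B.mulVecLin.domRestrict V')
      rwa [LinearMap.range_domRestrict] at this
    have hkereq : Module.finrank ℂ (LinearMap.ker (B.mulVecLin.domRestrict V'))
        = Module.finrank ℂ (LinearMap.ker B.mulVecLin) := by
      rw [LinearMap.ker_domRestrict]
      exact LinearEquiv.finrank_eq (Submodule.comapSubtypeEquivOfLe hker)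
    have hrn2 : 2*r + Module.finrank ℂ (LinearMap.ker B.mulVecLin) = N+1 := by
      have h1 := LinearMap.finrank_range_add_finrank_ker (B.mulVecLin)
      rw [Module.finrank_fin_fun] at h1
      have hrB := hAB 0
      have hB0 : (B + (0:ℂ) • A) = B := by simp
      rw [hB0, Matrix.rank] at hrB
      rw [hrB] at h1
      exact h1
    have hVle : Module.finrank ℂ V' ≤ N+1 := by
      simpa [Module.finrank_fin_fun] using V'.finrank_le
    omega
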